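/- arXiv:0812.1302 — 3 statements merged into one kernel-verified Lean document; each statement's English description precedes it below -/
import Mathlib

section
/- Let β ∈ (0,1]. The image of the measure λ ⊗ μ under the map (s,x) ↦ (log s, log(1 + x/s)) from (0,∞) × (0,∞) to ℝ × (0,∞), where λ is Lebesgue measure and μ((x,∞)) = (1+β)/(βx), equals λ ⊗ ρ where ρ((y,∞)) = (1+β)/(β(e^y − 1)) for y > 0. -/
open MeasureTheory Set

/-- If a measure vanishes on `Iic 0`, then every set has the same measure as its
intersection with `Ioi 0`. -/
lemma meas_eq_inter_Ioi {μ : Measure ℝ} (hμ0 : μ (Iic 0) = 0) (A : Set ℝ) :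
    μ A = μ (A ∩ Ioi 0) := by
  have h : A ∩ Ioi 0 = A \ Iic 0 := by
    ext x; simp [mem_Ioi, not_le, and_comm]
  rw [h, measure_diff_null hμ0]

/-- Two measures on ℝ vanishing on `Iic 0` and with equal, finite tails on `Ioi x`
for every `x > 0` are equal. -/
lemma ext_of_tail {μ ν : Measure ℝ} (hμ0 : μ (Iic 0) = 0) (hν0 : ν (Iic 0) = 0)
    (hfin : ∀ x > (0:ℝ), μ (Ioi x) ≠ ⊤)
    (h : ∀ x > (0:ℝ), μ (Ioi x) = ν (Ioi x)) : μ = ν := by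
  have key : ∀ ε > (0:ℝ), μ.restrict (Ioi ε) = ν.restrict (Ioi ε) := by
    intro ε hε
    have hfinε : IsFiniteMeasure (μ.restrict (Ioi ε)) := by
      constructor
      rw [Measure.restrict_apply_univ]
      exact (hfin ε hε).lt_top
    have hpi : IsPiSystem (range (Ioi : ℝ → Set ℝ)) := by
      rintro _ ⟨a, rfl⟩ _ ⟨b, rfl⟩ -
      exact ⟨a ⊔ b, Ioi_inter_Ioi.symm⟩
    refine ext_of_generate_finite (range Ioi)
      ((BorelSpace.measurable_eq (α := ℝ)).trans (borel_eq_generateFrom_Ioi ℝ)) hpi ?_ ?_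
    · rintro _ ⟨x, rfl⟩
      rw [Measure.restrict_apply measurableSet_Ioi, Measure.restrict_apply measurableSet_Ioi,
        Ioi_inter_Ioi]
      exact h _ (lt_sup_iff.2 (Or.inr hε))
    · rw [Measure.restrict_apply_univ, Measure.restrict_apply_univ]
      exact h ε hε
  ext A hA
  have hU : Ioi (0:ℝ) = ⋃ n : ℕ, Ioi ((n:ℝ)+1)⁻¹ := by
    ext x
    simp only [mem_Ioi, mem_iUnion]
    constructor
    · intro hx
      obtain ⟨n, hn⟩ := exists_nat_gt x⁻¹
      refine ⟨n, ?_⟩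
      have h1 : x⁻¹ < (n:ℝ) + 1 := hn.trans (lt_add_one _)
      have h2 : (0:ℝ) < x⁻¹ := inv_pos.2 hx
      calc ((n:ℝ)+1)⁻¹ < (x⁻¹)⁻¹ := by
            apply inv_strictAnti₀ h2 h1
        _ = x := inv_inv x
    · rintro ⟨n, hn⟩
      exact lt_trans (by positivity) hn
  have hmono : Monotone (fun n : ℕ => A ∩ Ioi ((n:ℝ)+1)⁻¹) := by
    intro m n hmn
    apply inter_subset_inter_right
    apply Ioi_subset_Ioi
    apply inv_anti₀ (by positivity)
    have : (m:ℝ) ≤ n := Nat.cast_le.2 hmn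
    linarith
  have hAU : A ∩ Ioi 0 = ⋃ n : ℕ, A ∩ Ioi ((n:ℝ)+1)⁻¹ := by
    rw [hU, inter_iUnion]
  calc μ A = μ (A ∩ Ioi 0) := meas_eq_inter_Ioi hμ0 A
    _ = ⨆ n : ℕ, μ (A ∩ Ioi ((n:ℝ)+1)⁻¹) := by
        rw [hAU, hmono.directed_le.measure_iUnion]
    _ = ⨆ n : ℕ, ν (A ∩ Ioi ((n:ℝ)+1)⁻¹) := by
        congr 1; funext n
        have := key ((n:ℝ)+1)⁻¹ (by positivity)
        rw [← Measure.restrict_apply hA, ← Measure.restrict_apply hA, this]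
    _ = ν (A ∩ Ioi 0) := by
        rw [hAU, hmono.directed_le.measure_iUnion]
    _ = ν A := (meas_eq_inter_Ioi hν0 A).symm

/-- A measure vanishing on `Iic 0` with finite tails is σ-finite. -/
lemma sigmaFinite_of_tail {μ : Measure ℝ} (hμ0 : μ (Iic 0) = 0)
    (hfin : ∀ x > (0:ℝ), μ (Ioi x) ≠ ⊤) : SigmaFinite μ := by
  refine ⟨⟨⟨fun n => Iic 0 ∪ Ioi ((n:ℝ)+1)⁻¹, fun _ => mem_univ _, fun n => ?_, ?_⟩⟩⟩
  · apply lt_of_le_of_lt (measure_union_le _ _)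
    rw [hμ0, zero_add]
    exact (hfin _ (by positivity)).lt_top
  · apply eq_univ_iff_forall.2
    intro x
    rcases le_or_gt x 0 with hx | hx
    · exact mem_iUnion.2 ⟨0, Or.inl hx⟩
    · obtain ⟨n, hn⟩ := exists_nat_gt x⁻¹
      refine mem_iUnion.2 ⟨n, Or.inr ?_⟩
      have h1 : x⁻¹ < (n:ℝ) + 1 := hn.trans (lt_add_one _)
      have h2 : (0:ℝ) < x⁻¹ := inv_pos.2 hx
      have : ((n:ℝ)+1)⁻¹ < (x⁻¹)⁻¹ := inv_strictAnti₀ h2 h1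
      rwa [inv_inv] at this

/-- The image under `log` of the measure `σ⁻¹ dσ` on `(0,∞)` is Lebesgue measure. -/
lemma map_log_haar :
    Measure.map Real.log
      ((volume.restrict (Ioi 0)).withDensity (fun σ => ENNReal.ofReal σ⁻¹)) = volume := by
  symm
  refine Measure.ext_of_Ioc' volume _ (fun a b _ => by simp) ?_
  intro a b hab
  rw [Measure.map_apply Real.measurable_log measurableSet_Ioc,
    withDensity_apply _ (Real.measurable_log measurableSet_Ioc),
    Measure.restrict_restrict (Real.measurable_log measurableSet_Ioc)]
  have hset : Real.log ⁻¹' Ioc a b ∩ Ioi 0 = Ioc (Real.exp a) (Real.exp b) := by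
    ext x
    simp only [mem_inter_iff, mem_preimage, mem_Ioc, mem_Ioi]
    constructor
    · rintro ⟨⟨h1, h2⟩, hx⟩
      exact ⟨(Real.lt_log_iff_exp_lt hx).1 h1, (Real.log_le_iff_le_exp hx).1 h2⟩
    · rintro ⟨h1, h2⟩
      have hx : 0 < x := lt_trans (Real.exp_pos a) h1
      exact ⟨⟨(Real.lt_log_iff_exp_lt hx).2 h1, (Real.log_le_iff_le_exp hx).2 h2⟩, hx⟩
  rw [hset]
  have hApos : 0 < Real.exp a := Real.exp_pos a
  have hAB : Real.exp a ≤ Real.exp b := Real.exp_le_exp.2 hab.le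
  have hInt : IntegrableOn (fun x : ℝ => x⁻¹) (Ioc (Real.exp a) (Real.exp b)) volume := by
    have := intervalIntegral.intervalIntegrable_inv (f := fun x : ℝ => x) (μ := volume)
      (a := Real.exp a) (b := Real.exp b)
      (fun x hx => by
        rw [uIcc_of_le hAB] at hx
        exact ne_of_gt (lt_of_lt_of_le hApos hx.1))
      (continuousOn_id)
    rw [intervalIntegrable_iff_integrableOn_Ioc_of_le hAB] at this
    exact this
  have hnn : 0 ≤ᵐ[volume.restrict (Ioc (Real.exp a) (Real.exp b))] fun x : ℝ => x⁻¹ := by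
    refine (ae_restrict_iff' measurableSet_Ioc).2 (Filter.Eventually.of_forall ?_)
    intro x hx
    exact inv_nonneg.2 (le_of_lt (lt_of_lt_of_le hApos hx.1.le))
  rw [← ofReal_integral_eq_lintegral_ofReal hInt hnn]
  have hval : ∫ x in Ioc (Real.exp a) (Real.exp b), x⁻¹ = b - a := by
    rw [← intervalIntegral.integral_of_le hAB, integral_inv (by
      rw [uIcc_of_le hAB]
      intro h
      exact absurd h.1 (not_le.2 hApos)),
      ← Real.exp_sub, Real.log_exp]
  rw [hval, Real.volume_Ioc]

/-- log-substitution for set integrals of `σ⁻¹` over `(0,∞)`. -/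
lemma lintegral_log_indicator (s : Set ℝ) (hs : MeasurableSet s) :
    ∫⁻ σ in Ioi (0:ℝ), (Real.log ⁻¹' s).indicator (fun σ => ENNReal.ofReal σ⁻¹) σ
      = volume s := by
  rw [lintegral_indicator (Real.measurable_log hs),
    ← withDensity_apply _ (Real.measurable_log hs),
    ← Measure.map_apply Real.measurable_log hs, map_log_haar]

/-- The image of λ ⊗ μ under (s,x) ↦ (log s, log(1 + x/s)), where
μ((x,∞)) = (1+β)/(βx), equals λ ⊗ ρ with ρ((y,∞)) = (1+β)/(β(e^y − 1)). -/
theorem mrca_stable_logtransform (β : ℝ) (hβ : β ∈ Ioc (0:ℝ) 1) (μ ρ : Measure ℝ)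
    (hμ : ∀ x > (0:ℝ), μ (Ioi x) = ENNReal.ofReal ((1 + β) / (β * x)))
    (hμ0 : μ (Iic 0) = 0)
    (hρ : ∀ y > (0:ℝ), ρ (Ioi y) = ENNReal.ofReal ((1 + β) / (β * (Real.exp y - 1))))
    (hρ0 : ρ (Iic 0) = 0) :
    Measure.map (fun p : ℝ × ℝ => (Real.log p.1, Real.log (1 + p.2 / p.1)))
        ((volume.restrict (Ioi 0)).prod μ)
      = (volume : Measure ℝ).prod ρ := by
  obtain ⟨hβ0, _⟩ := hβ
  have hμfin : ∀ x > (0:ℝ), μ (Ioi x) ≠ ⊤ := fun x hx => by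
    rw [hμ x hx]; exact ENNReal.ofReal_ne_top
  have hρfin : ∀ y > (0:ℝ), ρ (Ioi y) ≠ ⊤ := fun y hy => by
    rw [hρ y hy]; exact ENNReal.ofReal_ne_top
  haveI : SigmaFinite μ := sigmaFinite_of_tail hμ0 hμfin
  haveI : SigmaFinite ρ := sigmaFinite_of_tail hρ0 hρfin
  have hmeasL : Measurable (fun u : ℝ => Real.log (1 + u)) :=
    Real.measurable_log.comp (measurable_const.add measurable_id)
  -- ρ is the image of μ under u ↦ log (1+u)
  have hρmap : ρ = Measure.map (fun u => Real.log (1 + u)) μ := by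
    refine ext_of_tail hρ0 ?_ hρfin ?_
    · rw [Measure.map_apply hmeasL measurableSet_Iic]
      rw [meas_eq_inter_Ioi hμ0]
      have : (fun u => Real.log (1 + u)) ⁻¹' Iic 0 ∩ Ioi 0 = ∅ := by
        ext u
        simp only [mem_inter_iff, mem_preimage, mem_Iic, mem_Ioi, mem_empty_iff_false,
          iff_false, not_and, not_le]
        intro h hu
        have := Real.log_pos (show (1:ℝ) < 1 + u by linarith)
        linarith
      rw [this, measure_empty]
    · intro y hy
      rw [Measure.map_apply hmeasL measurableSet_Ioi, meas_eq_inter_Ioi hμ0]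
      have hey : 0 < Real.exp y - 1 := by
        have := Real.one_lt_exp_iff.2 hy
        linarith
      have hset : (fun u => Real.log (1 + u)) ⁻¹' Ioi y ∩ Ioi 0 = Ioi (Real.exp y - 1) := by
        ext u
        simp only [mem_inter_iff, mem_preimage, mem_Ioi]
        constructor
        · rintro ⟨h1, h2⟩
          have := (Real.lt_log_iff_exp_lt (by linarith : (0:ℝ) < 1 + u)).1 h1
          linarith
        · intro h
          have hu : 0 < u := lt_trans hey h
          exact ⟨(Real.lt_log_iff_exp_lt (by linarith : (0:ℝ) < 1 + u)).2 (by linarith), hu⟩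
      rw [hρ y hy, hset, hμ _ hey]
  -- scaling property of μ
  have hscale : ∀ σ : ℝ, 0 < σ →
      Measure.map (fun x => x / σ) μ = (ENNReal.ofReal σ)⁻¹ • μ := by
    intro σ hσ
    have hmdiv : Measurable (fun x : ℝ => x / σ) := measurable_id.div_const σ
    symm
    refine ext_of_tail ?_ ?_ ?_ ?_
    · rw [Measure.smul_apply, hμ0, smul_zero]
    · rw [Measure.map_apply hmdiv measurableSet_Iic]
      have : (fun x : ℝ => x / σ) ⁻¹' Iic 0 = Iic 0 := by
        ext x
        simp only [mem_preimage, mem_Iic]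
        rw [div_le_iff₀ hσ, zero_mul]
      rw [this, hμ0]
    · intro x hx
      rw [Measure.smul_apply, hμ x hx, smul_eq_mul]
      exact ENNReal.mul_ne_top
        (ENNReal.inv_ne_top.2 (by simp [ENNReal.ofReal_pos.2 hσ, ne_of_gt]))
        ENNReal.ofReal_ne_top
    · intro y hy
      rw [Measure.smul_apply, Measure.map_apply hmdiv measurableSet_Ioi]
      have hset : (fun x : ℝ => x / σ) ⁻¹' Ioi y = Ioi (y * σ) := by
        ext x
        simp only [mem_preimage, mem_Ioi]
        rw [lt_div_iff₀ hσ]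
      have hr : σ⁻¹ * ((1 + β) / (β * y)) = (1 + β) / (β * (y * σ)) := by
        field_simp
      rw [hset, hμ y hy, hμ (y * σ) (mul_pos hy hσ), smul_eq_mul,
        ← ENNReal.ofReal_inv_of_pos hσ,
        ← ENNReal.ofReal_mul (inv_nonneg.2 hσ.le), hr]
  -- main computation on rectangles
  symm
  refine Measure.prod_eq ?_
  intro s t hs ht
  set T : ℝ × ℝ → ℝ × ℝ := fun p => (Real.log p.1, Real.log (1 + p.2 / p.1)) with hT
  have hmeasT : Measurable T :=
    (Real.measurable_log.comp measurable_fst).prodMk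
      (Real.measurable_log.comp (measurable_const.add (measurable_snd.div measurable_fst)))
  rw [Measure.map_apply hmeasT (hs.prod ht),
    Measure.prod_apply (hmeasT (hs.prod ht))]
  have hinner : ∀ σ ∈ Ioi (0:ℝ),
      μ (Prod.mk σ ⁻¹' (T ⁻¹' s ×ˢ t))
        = (Real.log ⁻¹' s).indicator (fun σ => ENNReal.ofReal σ⁻¹) σ * ρ t := by
    intro σ hσ
    have hσ' : (0:ℝ) < σ := hσ
    have hpre : Prod.mk σ ⁻¹' (T ⁻¹' s ×ˢ t)
        = {x : ℝ | Real.log σ ∈ s ∧ Real.log (1 + x / σ) ∈ t} := rfl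
    by_cases hmem : Real.log σ ∈ s
    · have heq : Prod.mk σ ⁻¹' (T ⁻¹' s ×ˢ t)
          = (fun x => x / σ) ⁻¹' ((fun u => Real.log (1 + u)) ⁻¹' t) := by
        rw [hpre]
        ext x
        simp [hmem]
      have hmdiv : Measurable (fun x : ℝ => x / σ) := measurable_id.div_const σ
      rw [heq, ← Measure.map_apply hmdiv (hmeasL ht),
        hscale σ hσ', Measure.smul_apply, smul_eq_mul,
        ← Measure.map_apply hmeasL ht, ← hρmap,
        indicator_of_mem (show σ ∈ Real.log ⁻¹' s from hmem),
        ENNReal.ofReal_inv_of_pos hσ']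
    · have heq : Prod.mk σ ⁻¹' (T ⁻¹' s ×ˢ t) = ∅ := by
        rw [hpre]
        ext x
        simp [hmem]
      rw [heq, measure_empty,
        indicator_of_notMem (show σ ∉ Real.log ⁻¹' s from hmem), zero_mul]
  rw [setLIntegral_congr_fun measurableSet_Ioi hinner]
  rw [lintegral_mul_const _ ((measurable_inv.ennreal_ofReal).indicator (Real.measurable_log hs)),
    lintegral_log_indicator s hs]
end

section
/- Fix x > 0. The function y ↦ μ((y,∞)) exp(−∫_y^x μ((z,∞)) dz) on (0,x) is a probability density if and only if ∫₀^1 μ((z,∞)) dz = ∞; in particular, under the assumption μ((0,∞)) = ∞ with μ absolutely continuous with a.e.-positive density, if ∫₀^1 μ((z,∞)) dz = ∞ then ∫₀^x μ((y,∞)) exp(−∫_y^x μ((z,∞)) dz) dy = 1. -/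
open MeasureTheory Set Filter Topology

namespace MRCAauxiliary
variable {μ : Measure ℝ}

lemma diffG (hfin : ∀ y > (0:ℝ), μ (Ioi y) < ⊤) {u v : ℝ} (hu : 0 < u) (huv : u ≤ v) :
    (μ (Ioi u)).toReal - (μ (Ioi v)).toReal = (μ (Ioc u v)).toReal := by
  have h1 : μ (Ioi u) = μ (Ioc u v) + μ (Ioi v) := by
    rw [← Ioc_union_Ioi_eq_Ioi huv, measure_union (Ioc_disjoint_Ioi le_rfl) measurableSet_Ioi]
  rw [h1, ENNReal.toReal_add
    (((measure_mono Ioc_subset_Ioi_self).trans_lt (hfin u hu)).ne)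
    ((hfin v (hu.trans_le huv)).ne)]
  ring

lemma contG (hfin : ∀ y > (0:ℝ), μ (Ioi y) < ⊤) (hatom : ∀ y : ℝ, μ {y} = 0)
    {y0 : ℝ} (hy0 : 0 < y0) : ContinuousAt (fun y => (μ (Ioi y)).toReal) y0 := by
  rw [Metric.continuousAt_iff]
  intro ε hε
  have hmono : ∀ i j : ℝ, 0 < i → i ≤ j → Ioo (y0 - i) (y0 + i) ⊆ Ioo (y0 - j) (y0 + j) :=
    fun i j _ hij => Ioo_subset_Ioo (by linarith) (by linarith)
  have hfin' : ∃ r > (0:ℝ), μ (Ioo (y0 - r) (y0 + r)) ≠ ⊤ := by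
    refine ⟨y0 / 2, by positivity, ?_⟩
    refine ((measure_mono ?_).trans_lt (hfin (y0/2) (by positivity))).ne
    intro z hz
    simp only [mem_Ioo, mem_Ioi] at *
    linarith [hz.1]
  have hI : (⋂ r > (0:ℝ), Ioo (y0 - r) (y0 + r)) = {y0} := by
    ext z
    simp only [mem_iInter, mem_Ioo, mem_singleton_iff]
    constructor
    · intro h
      by_contra hne
      have hd : 0 < |z - y0| := abs_pos.2 (sub_ne_zero.2 hne)
      have h2 := h |z - y0| hd
      rcases abs_cases (z - y0) with ⟨he, _⟩ | ⟨he, _⟩ <;> rw [he] at h2 <;>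
        [linarith [h2.2]; linarith [h2.1]]
    · rintro rfl
      intro r hr
      constructor <;> linarith
  have htend := tendsto_measure_biInter_gt (μ := μ)
    (fun r _ => measurableSet_Ioo.nullMeasurableSet) hmono hfin'
  rw [hI, hatom y0] at htend
  have hev : ∀ᶠ r in 𝓝[>] (0:ℝ), μ (Ioo (y0 - r) (y0 + r)) < ENNReal.ofReal ε := by
    refine htend.eventually_lt_const ?_
    simpa using hε
  have hev2 : ∀ᶠ r in 𝓝[>] (0:ℝ), r < y0 / 2 :=
    eventually_nhdsWithin_of_eventually_nhds (eventually_lt_nhds (by positivity))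
  obtain ⟨δ, ⟨hδ1, hδ2⟩, hδ3⟩ := ((hev.and hev2).and self_mem_nhdsWithin).exists
  refine ⟨δ, hδ3, ?_⟩
  intro y hy
  rw [Real.dist_eq] at hy ⊢
  have hyy : |y - y0| < δ := hy
  have hy0' : 0 < y := by
    rcases abs_cases (y - y0) with ⟨he, _⟩ | ⟨he, _⟩ <;> nlinarith [hδ2]
  have hfinIoo : μ (Ioo (y0 - δ) (y0 + δ)) ≠ ⊤ := hδ1.ne_top
  have key : ∀ u v : ℝ, 0 < u → u ≤ v → Ioc u v ⊆ Ioo (y0 - δ) (y0 + δ) →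
      |(μ (Ioi u)).toReal - (μ (Ioi v)).toReal| < ε := by
    intro u v hu huv hsub
    rw [diffG hfin hu huv, abs_of_nonneg ENNReal.toReal_nonneg]
    calc (μ (Ioc u v)).toReal ≤ (μ (Ioo (y0 - δ) (y0 + δ))).toReal :=
          ENNReal.toReal_mono hfinIoo (measure_mono hsub)
      _ < ε := ENNReal.toReal_lt_of_lt_ofReal hδ1
  rcases le_total y y0 with hle | hle
  · exact key y y0 hy0' hle (fun z hz => by
      simp only [mem_Ioc, mem_Ioo] at *
      rcases abs_cases (y - y0) with ⟨he, _⟩ | ⟨he, _⟩ <;> constructor <;> nlinarith [hz.1, hz.2])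
  · rw [abs_sub_comm]
    exact key y0 y hy0 hle (fun z hz => by
      simp only [mem_Ioc, mem_Ioo] at *
      rcases abs_cases (y - y0) with ⟨he, _⟩ | ⟨he, _⟩ <;> constructor <;> nlinarith [hz.1, hz.2])

lemma Kderiv (hc : ∀ y0 > (0:ℝ), ContinuousAt (fun y => (μ (Ioi y)).toReal) y0)
    {x y0 : ℝ} (h0 : 0 < y0) (hyx : y0 ≤ x) :
    HasDerivAt (fun y => ∫ z in y..x, (μ (Ioi z)).toReal) (-(μ (Ioi y0)).toReal) y0 := by
  have hGm : Measurable (fun y => (μ (Ioi y)).toReal) := by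
    have h : Antitone (fun y => μ (Ioi y)) := fun a b hab => measure_mono (Ioi_subset_Ioi hab)
    exact ENNReal.measurable_toReal.comp h.measurable
  have hint : IntervalIntegrable (fun y => (μ (Ioi y)).toReal) volume y0 x := by
    apply ContinuousOn.intervalIntegrable
    intro z hz
    rw [uIcc_of_le hyx] at hz
    exact (hc z (lt_of_lt_of_le h0 hz.1)).continuousWithinAt
  exact intervalIntegral.integral_hasDerivAt_left hint
    (hGm.stronglyMeasurable.stronglyMeasurableAtFilter) (hc y0 h0)

lemma ftc (hc : ∀ y0 > (0:ℝ), ContinuousAt (fun y => (μ (Ioi y)).toReal) y0)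
    {x a : ℝ} (ha : 0 < a) (hax : a ≤ x) :
    ∫ y in a..x, (μ (Ioi y)).toReal * Real.exp (-∫ z in y..x, (μ (Ioi z)).toReal)
      = 1 - Real.exp (-∫ z in a..x, (μ (Ioi z)).toReal) := by
  have hKd : ∀ y ∈ uIcc a x,
      HasDerivAt (fun y => Real.exp (-∫ z in y..x, (μ (Ioi z)).toReal))
        ((μ (Ioi y)).toReal * Real.exp (-∫ z in y..x, (μ (Ioi z)).toReal)) y := by
    intro y hy
    rw [uIcc_of_le hax] at hy
    have h1 := Kderiv hc (lt_of_lt_of_le ha hy.1) hy.2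
    have h2 : HasDerivAt (fun y => -∫ z in y..x, (μ (Ioi z)).toReal) ((μ (Ioi y)).toReal) y := by
      simpa using h1.fun_neg
    simpa [mul_comm] using h2.exp
  have hcontK : ContinuousOn
      (fun y => (μ (Ioi y)).toReal * Real.exp (-∫ z in y..x, (μ (Ioi z)).toReal)) (uIcc a x) := by
    intro y hy
    have h := hKd y hy
    rw [uIcc_of_le hax] at hy
    exact ((hc y (lt_of_lt_of_le ha hy.1)).mul h.continuousAt).continuousWithinAt
  rw [intervalIntegral.integral_eq_sub_of_hasDerivAt hKd hcontK.intervalIntegrable,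
    intervalIntegral.integral_same]
  simp

lemma main_calc (hfin : ∀ y > (0:ℝ), μ (Ioi y) < ⊤) (hatom : ∀ y : ℝ, μ {y} = 0)
    {x : ℝ} (hx : 0 < x)
    (hc : ∀ y0 > (0:ℝ), ContinuousAt (fun y => (μ (Ioi y)).toReal) y0) :
    ((∫ y in Ioo (0:ℝ) x,
        (μ (Ioi y)).toReal * Real.exp (-∫ z in y..x, (μ (Ioi z)).toReal)) = 1
      ↔ (∫⁻ y in Ioo (0:ℝ) x, ENNReal.ofReal ((μ (Ioi y)).toReal)) = ⊤) := by
  have hGm : Measurable (fun y => (μ (Ioi y)).toReal) := by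
    have h : Antitone (fun y => μ (Ioi y)) := fun a b hab => measure_mono (Ioi_subset_Ioi hab)
    exact ENNReal.measurable_toReal.comp h.measurable
  have hGnn : ∀ y : ℝ, 0 ≤ (μ (Ioi y)).toReal := fun y => ENNReal.toReal_nonneg
  set a : ℕ → ℝ := fun n => x / (n + 2) with hadef
  have hapos : ∀ n, 0 < a n := fun n => by positivity
  have halt : ∀ n, a n < x := by
    intro n
    rw [hadef]
    rw [div_lt_iff₀ (by positivity)]
    nlinarith [hx, Nat.cast_nonneg (α := ℝ) n]
  have hatend : Tendsto a atTop (𝓝 0) := by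
    apply Tendsto.div_atTop (tendsto_const_nhds (x := x))
    exact tendsto_atTop_add_const_right _ 2 tendsto_natCast_atTop_atTop
  have cover : AECover (volume.restrict (Ioo (0:ℝ) x)) atTop (fun n => Ioc (a n) x) :=
    aecover_Ioo_of_Ioc hatend tendsto_const_nhds
  have hres : ∀ n, (volume.restrict (Ioo (0:ℝ) x)).restrict (Ioc (a n) x)
      = volume.restrict (Ioo (a n) x) := by
    intro n
    rw [Measure.restrict_restrict measurableSet_Ioc]
    congr 1
    ext z
    simp only [mem_inter_iff, mem_Ioc, mem_Ioo]
    constructor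
    · rintro ⟨⟨h1, h2⟩, _, h4⟩; exact ⟨h1, h4⟩
    · rintro ⟨h1, h2⟩; exact ⟨⟨h1, h2.le⟩, (hapos n).trans h1, h2⟩
  have hfcont : ∀ n, ContinuousOn
      (fun y => (μ (Ioi y)).toReal * Real.exp (-∫ z in y..x, (μ (Ioi z)).toReal))
      (Icc (a n) x) := by
    intro n y hy
    have h1 : 0 < y := lt_of_lt_of_le (hapos n) hy.1
    exact ((hc y h1).mul
      (Real.continuous_exp.continuousAt.comp ((Kderiv hc h1 hy.2).continuousAt.neg))).continuousWithinAt
  have hfint : ∀ n, IntegrableOn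
      (fun y => (μ (Ioi y)).toReal * Real.exp (-∫ z in y..x, (μ (Ioi z)).toReal))
      (Ioc (a n) x) (volume.restrict (Ioo (0:ℝ) x)) := by
    intro n
    rw [IntegrableOn, hres n]
    exact ((hfcont n).integrableOn_Icc).mono_set Ioo_subset_Icc_self
  have hval : ∀ n, (∫ y in Ioc (a n) x,
      (μ (Ioi y)).toReal * Real.exp (-∫ z in y..x, (μ (Ioi z)).toReal)
        ∂(volume.restrict (Ioo (0:ℝ) x)))
      = 1 - Real.exp (-∫ z in (a n)..x, (μ (Ioi z)).toReal) := by
    intro n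
    rw [hres n, ← ftc hc (hapos n) (halt n).le,
      intervalIntegral.integral_of_le (halt n).le, integral_Ioc_eq_integral_Ioo]
  have hGintOn : ∀ n, IntegrableOn (fun y => (μ (Ioi y)).toReal) (Ioo (a n) x) volume := by
    intro n
    refine (ContinuousOn.integrableOn_Icc ?_).mono_set Ioo_subset_Icc_self
    exact fun y hy => (hc y (lt_of_lt_of_le (hapos n) hy.1)).continuousWithinAt
  have hlint : ∀ n, (∫⁻ z in Ioc (a n) x, ENNReal.ofReal ((μ (Ioi z)).toReal)
        ∂(volume.restrict (Ioo (0:ℝ) x)))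
      = ENNReal.ofReal (∫ z in (a n)..x, (μ (Ioi z)).toReal) := by
    intro n
    rw [hres n, ← ofReal_integral_eq_lintegral_ofReal (hGintOn n)
      (ae_of_all _ (fun y => hGnn y)),
      intervalIntegral.integral_of_le (halt n).le, integral_Ioc_eq_integral_Ioo]
  have hKnn : ∀ n, 0 ≤ ∫ z in (a n)..x, (μ (Ioi z)).toReal :=
    fun n => intervalIntegral.integral_nonneg (halt n).le (fun u _ => hGnn u)
  have hTt : Tendsto (fun n => ENNReal.ofReal (∫ z in (a n)..x, (μ (Ioi z)).toReal)) atTop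
      (𝓝 (∫⁻ y in Ioo (0:ℝ) x, ENNReal.ofReal ((μ (Ioi y)).toReal))) := by
    have h2 := cover.lintegral_tendsto_of_countably_generated
      (f := fun z => ENNReal.ofReal ((μ (Ioi z)).toReal)) hGm.ennreal_ofReal.aemeasurable
    simpa only [hlint] using h2
  have hfnn : 0 ≤ᵐ[volume.restrict (Ioo (0:ℝ) x)]
      (fun y => (μ (Ioi y)).toReal * Real.exp (-∫ z in y..x, (μ (Ioi z)).toReal)) :=
    ae_of_all _ (fun y => mul_nonneg (hGnn y) (Real.exp_pos _).le)
  by_cases hT : (∫⁻ y in Ioo (0:ℝ) x, ENNReal.ofReal ((μ (Ioi y)).toReal)) = ⊤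
  · rw [hT] at hTt
    have hKtop : Tendsto (fun n => ∫ z in (a n)..x, (μ (Ioi z)).toReal) atTop atTop := by
      rw [tendsto_atTop]
      intro b
      have h2 : ∀ᶠ n in atTop,
          ENNReal.ofReal (max b 0) < ENNReal.ofReal (∫ z in (a n)..x, (μ (Ioi z)).toReal) :=
        hTt.eventually (eventually_gt_nhds (ENNReal.ofReal_lt_top))
      filter_upwards [h2] with n hn
      have h3 := (ENNReal.ofReal_lt_ofReal_iff_of_nonneg (le_max_right b 0)).1 hn
      linarith [le_max_left b 0]
    have htendI : Tendsto (fun n => ∫ y in Ioc (a n) x,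
        (μ (Ioi y)).toReal * Real.exp (-∫ z in y..x, (μ (Ioi z)).toReal)
          ∂(volume.restrict (Ioo (0:ℝ) x))) atTop (𝓝 1) := by
      simp_rw [hval]
      have h4 : Tendsto (fun n => Real.exp (-∫ z in (a n)..x, (μ (Ioi z)).toReal)) atTop (𝓝 0) :=
        Real.tendsto_exp_atBot.comp (tendsto_neg_atBot_iff.2 hKtop)
      simpa using tendsto_const_nhds.sub h4
    have hmain := cover.integral_eq_of_tendsto_of_nonneg_ae 1 hfnn hfint htendI
    simp only [hT, iff_true]
    exact hmain
  · have hKlim : Tendsto (fun n => ∫ z in (a n)..x, (μ (Ioi z)).toReal) atTop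
        (𝓝 (∫⁻ y in Ioo (0:ℝ) x, ENNReal.ofReal ((μ (Ioi y)).toReal)).toReal) := by
      have h2 := (ENNReal.tendsto_toReal hT).comp hTt
      have h3 : (fun n => ∫ z in (a n)..x, (μ (Ioi z)).toReal)
          = fun n => (ENNReal.ofReal (∫ z in (a n)..x, (μ (Ioi z)).toReal)).toReal := by
        funext n; rw [ENNReal.toReal_ofReal (hKnn n)]
      rw [h3]; exact h2
    set Tr := (∫⁻ y in Ioo (0:ℝ) x, ENNReal.ofReal ((μ (Ioi y)).toReal)).toReal with hTrdef
    have htendI : Tendsto (fun n => ∫ y in Ioc (a n) x,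
        (μ (Ioi y)).toReal * Real.exp (-∫ z in y..x, (μ (Ioi z)).toReal)
          ∂(volume.restrict (Ioo (0:ℝ) x))) atTop (𝓝 (1 - Real.exp (-Tr))) := by
      simp_rw [hval]
      exact tendsto_const_nhds.sub ((Real.continuous_exp.tendsto _).comp hKlim.neg)
    have hmain := cover.integral_eq_of_tendsto_of_nonneg_ae _ hfnn hfint htendI
    simp only [hT, iff_false]
    rw [hmain]
    have h5 := Real.exp_pos (-Tr)
    intro hcontra
    linarith

lemma TL_equiv (hfin : ∀ y > (0:ℝ), μ (Ioi y) < ⊤) {x : ℝ} (hx : 0 < x) :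
    ((∫⁻ y in Ioo (0:ℝ) x, ENNReal.ofReal ((μ (Ioi y)).toReal)) = ⊤
      ↔ (∫⁻ z in Ioo (0:ℝ) 1, ENNReal.ofReal ((μ (Ioi z)).toReal)) = ⊤) := by
  set c := min x 1 with hcdef
  have hc0 : 0 < c := lt_min hx one_pos
  have hbound : ∀ d : ℝ, (∫⁻ z in Ico c d, ENNReal.ofReal ((μ (Ioi z)).toReal)) ≠ ⊤ := by
    intro d
    have hb : ∀ z ∈ Ico c d, ENNReal.ofReal ((μ (Ioi z)).toReal)
        ≤ ENNReal.ofReal ((μ (Ioi c)).toReal) := fun z hz =>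
      ENNReal.ofReal_le_ofReal
        (ENNReal.toReal_mono (hfin c hc0).ne (measure_mono (Ioi_subset_Ioi hz.1)))
    have h1 : (∫⁻ z in Ico c d, ENNReal.ofReal ((μ (Ioi z)).toReal))
        ≤ ENNReal.ofReal ((μ (Ioi c)).toReal) * volume (Ico c d) := by
      rw [← setLIntegral_const]
      exact setLIntegral_mono' measurableSet_Ico hb
    exact (h1.trans_lt (ENNReal.mul_lt_top ENNReal.ofReal_lt_top measure_Ico_lt_top)).ne
  have hsplit : ∀ d : ℝ, c ≤ d →
      (∫⁻ z in Ioo (0:ℝ) d, ENNReal.ofReal ((μ (Ioi z)).toReal))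
        = (∫⁻ z in Ioo (0:ℝ) c, ENNReal.ofReal ((μ (Ioi z)).toReal))
          + (∫⁻ z in Ico c d, ENNReal.ofReal ((μ (Ioi z)).toReal)) := by
    intro d hcd
    have hset : Ioo (0:ℝ) d = Ioo 0 c ∪ Ico c d := by
      ext z
      simp only [mem_union, mem_Ioo, mem_Ico]
      constructor
      · rintro ⟨h1, h2⟩
        rcases lt_or_ge z c with h | h
        · exact Or.inl ⟨h1, h⟩
        · exact Or.inr ⟨h, h2⟩
      · rintro (⟨h1, h2⟩ | ⟨h1, h2⟩)
        · exact ⟨h1, lt_of_lt_of_le h2 hcd⟩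
        · exact ⟨lt_of_lt_of_le hc0 h1, h2⟩
    rw [hset, lintegral_union measurableSet_Ico (by
      rw [Set.disjoint_left]
      intro z hz hz2
      exact absurd hz2.1 (not_le.2 hz.2))]
  rw [hsplit x (min_le_left _ _), hsplit 1 (min_le_right _ _),
    ENNReal.add_eq_top, ENNReal.add_eq_top]
  simp [hbound x, hbound 1]

end MRCAauxiliary

open MeasureTheory Set

/-- Fix x > 0. The post-jump density y ↦ μ((y,∞)) exp(−∫_y^x μ((z,∞)) dz) on (0,x)
integrates to 1 if and only if ∫₀^1 μ((z,∞)) dz = ∞. In particular, if μ((0,∞)) = ∞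
and ∫₀^1 μ((z,∞)) dz = ∞ then the integral equals 1. -/
theorem mrca_postjump_density (m : ℝ → ℝ) (μ : Measure ℝ)
    (hm : ∀ᵐ y ∂(volume.restrict (Ioi 0)), 0 < m y)
    (hμ : μ = (volume.restrict (Ioi 0)).withDensity fun y => ENNReal.ofReal (m y))
    (hfin : ∀ y > (0:ℝ), μ (Ioi y) < ⊤)
    (x : ℝ) (hx : 0 < x) :
    ((∫ y in Ioo (0:ℝ) x,
        (μ (Ioi y)).toReal * Real.exp (-∫ z in y..x, (μ (Ioi z)).toReal)) = 1
      ↔ ∫⁻ z in Ioo (0:ℝ) 1, ENNReal.ofReal ((μ (Ioi z)).toReal) = ⊤) ∧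
    (μ (Ioi 0) = ⊤ →
      (∫⁻ z in Ioo (0:ℝ) 1, ENNReal.ofReal ((μ (Ioi z)).toReal) = ⊤) →
      (∫ y in Ioo (0:ℝ) x,
        (μ (Ioi y)).toReal * Real.exp (-∫ z in y..x, (μ (Ioi z)).toReal)) = 1) := by
  have hatom : ∀ y : ℝ, μ {y} = 0 := by
    intro y
    rw [hμ, withDensity_apply _ (measurableSet_singleton y)]
    apply setLIntegral_measure_zero
    rw [Measure.restrict_apply (measurableSet_singleton y)]
    exact measure_mono_null inter_subset_left Real.volume_singleton
  have hc : ∀ y0 > (0:ℝ), ContinuousAt (fun y => (μ (Ioi y)).toReal) y0 :=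
    fun y0 h => MRCAauxiliary.contG hfin hatom h
  have hiff := (MRCAauxiliary.main_calc hfin hatom hx hc).trans
    (MRCAauxiliary.TL_equiv hfin hx)
  exact ⟨hiff, fun _ hL => hiff.2 hL⟩
end

section
/- The trough chain transition density q(x,z) = μ((z,∞)) ∫_{x∨z}^∞ [m(y)/μ((x,∞))] exp(−∫_z^y μ((u,∞)) du) dy is self-adjoint with respect to the measure with density q(x) = μ((x,∞))² exp(−∫_x^∞ μ((u,∞)) du); i.e., q(x) q(x,z) = q(z) q(z,x) for all x, z > 0. -/
open MeasureTheory Set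

lemma split_int (G : ℝ → ℝ) {a y : ℝ} (h : a ≤ y) (hG : IntegrableOn G (Ioi a)) :
    ∫ u in a..y, G u = (∫ u in Ioi a, G u) - ∫ u in Ioi y, G u := by
  rw [intervalIntegral.integral_of_le h]
  have hu : Ioc a y ∪ Ioi y = Ioi a := Ioc_union_Ioi_eq_Ioi h
  have hd : Disjoint (Ioc a y) (Ioi y) := by simp [Set.disjoint_left]
  have h1 : IntegrableOn G (Ioc a y) := hG.mono_set (by rw [← hu]; exact subset_union_left)
  have h2 : IntegrableOn G (Ioi y) := hG.mono_set (by rw [← hu]; exact subset_union_right)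
  have := MeasureTheory.setIntegral_union hd measurableSet_Ioi h1 h2
  rw [hu] at this
  linarith

/-- The trough chain transition density
q(x,z) = μ((z,∞)) ∫_{x∨z}^∞ [m(y)/μ((x,∞))] exp(−∫_z^y μ((u,∞))du) dy
is self-adjoint with respect to q(x) = μ((x,∞))² exp(−∫_x^∞ μ((u,∞))du):
q(x)q(x,z) = q(z)q(z,x). -/
theorem trough_chain_selfadjoint (m : ℝ → ℝ) (μ : Measure ℝ)
    (hμ : μ = (volume.restrict (Ioi 0)).withDensity fun x => ENNReal.ofReal (m x))
    (hm : ∀ x ∈ Ioi (0:ℝ), 0 < m x)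
    (hfin : ∀ x > (0:ℝ), μ (Ioi x) < ⊤)
    (hint : ∀ x > (0:ℝ), IntegrableOn (fun u => (μ (Ioi u)).toReal) (Ioi x))
    (x z : ℝ) (hx : 0 < x) (hz : 0 < z) :
    ((μ (Ioi x)).toReal ^ 2 * Real.exp (-∫ u in Ioi x, (μ (Ioi u)).toReal)) *
        ((μ (Ioi z)).toReal * ∫ y in Ioi (max x z),
          (m y / (μ (Ioi x)).toReal) * Real.exp (-∫ u in z..y, (μ (Ioi u)).toReal))
      = ((μ (Ioi z)).toReal ^ 2 * Real.exp (-∫ u in Ioi z, (μ (Ioi u)).toReal)) *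
        ((μ (Ioi x)).toReal * ∫ y in Ioi (max z x),
          (m y / (μ (Ioi z)).toReal) * Real.exp (-∫ u in x..y, (μ (Ioi u)).toReal)) := by
  set G : ℝ → ℝ := fun u => (μ (Ioi u)).toReal with hG
  set A : ℝ → ℝ := fun a => ∫ u in Ioi a, G u with hA
  rcases eq_or_ne ((μ (Ioi x)).toReal) 0 with hGx | hGx
  · simp [hGx]
  rcases eq_or_ne ((μ (Ioi z)).toReal) 0 with hGz | hGz
  · simp [hGz]
  rw [max_comm z x]
  rw [← MeasureTheory.integral_const_mul (G z), ← MeasureTheory.integral_const_mul,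
      ← MeasureTheory.integral_const_mul (G x), ← MeasureTheory.integral_const_mul]
  refine MeasureTheory.setIntegral_congr_fun measurableSet_Ioi fun y hy => ?_
  have hyx : x ≤ y := le_of_lt (lt_of_le_of_lt (le_max_left x z) hy)
  have hyz : z ≤ y := le_of_lt (lt_of_le_of_lt (le_max_right x z) hy)
  have e1 : ∫ u in z..y, G u = A z - A y := split_int G hyz (hint z hz)
  have e2 : ∫ u in x..y, G u = A x - A y := split_int G hyx (hint x hx)
  simp only [e1, e2, neg_sub, Real.exp_sub,
    show (∫ u in Ioi x, G u) = A x from rfl, show (∫ u in Ioi z, G u) = A z from rfl,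
    Real.exp_neg]
  field_simp
  ring
end
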